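/- Let A : X ⇒ X and B : X ⇒ X be maximally monotone operators that are both 3* monotone, and suppose that D = dom A − dom B is a linear subspace of X. Then ran(Id − T_{(A,B)}) ≃ ran(Id − T_{(B,A)}) and v_{(A,B)} = v_{(B,A)}. -/

import Mathlib

open Set Pointwise

/-- Domain of a set-valued operator. -/
def svDom {X : Type*} (A : X → Set X) : Set X := {x | (A x).Nonempty}

/-- Range of a set-valued operator. -/
def svRan {X : Type*} (A : X → Set X) : Set X := ⋃ x, A x

/-- Monotonicity of a set-valued operator. -/
def IsMonotoneOp {X : Type*} [NormedAddCommGroup X] [InnerProductSpace ℝ X]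
    (A : X → Set X) : Prop :=
  ∀ ⦃x u y v : X⦄, u ∈ A x → v ∈ A y → 0 ≤ (inner ℝ (x - y) (u - v) : ℝ)

/-- Maximal monotonicity of a set-valued operator. -/
def IsMaxMonotoneOp {X : Type*} [NormedAddCommGroup X] [InnerProductSpace ℝ X]
    (A : X → Set X) : Prop :=
  IsMonotoneOp A ∧
    ∀ x u : X, (∀ y v : X, v ∈ A y → 0 ≤ (inner ℝ (x - y) (u - v) : ℝ)) → u ∈ A x

/-- `A` is 3* monotone (rectangular): for every `x ∈ dom A` and `v ∈ ran A`, the set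
`{⟪x - z, v - w⟫ : (z,w) ∈ gra A}` is bounded below. -/
def Is3StarMonotoneOp {X : Type*} [NormedAddCommGroup X] [InnerProductSpace ℝ X]
    (A : X → Set X) : Prop :=
  ∀ x ∈ svDom A, ∀ v ∈ svRan A,
    BddBelow {r : ℝ | ∃ z w : X, w ∈ A z ∧ r = (inner ℝ (x - z) (v - w) : ℝ)}

/-- Two sets are nearly equal if they have the same closure and the same relative
(intrinsic) interior. -/
def NearEq {X : Type*} [NormedAddCommGroup X] [NormedSpace ℝ X] (C D : Set X) : Prop :=
  closure C = closure D ∧ intrinsicInterior ℝ C = intrinsicInterior ℝ D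

/-- `J` is the resolvent of `A`: the single-valued, everywhere-defined map with
`x - J x ∈ A (J x)` for all `x`. -/
def IsResolventOf {X : Type*} [NormedAddCommGroup X] (J : X → X) (A : X → Set X) : Prop :=
  ∀ x : X, x - J x ∈ A (J x)

/-- The Douglas–Rachford operator `T = Id - J_A + J_B ∘ (2 J_A - Id)` built from
the resolvents `J_A` and `J_B`. -/
noncomputable def drT {X : Type*} [NormedAddCommGroup X] [NormedSpace ℝ X]
    (JA JB : X → X) : X → X :=
  fun x => x - JA x + JB ((2 : ℝ) • JA x - x)

section Auxiliary

variable {X : Type*} [NormedAddCommGroup X] [InnerProductSpace ℝ X]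

lemma resolvent_firm {A : X → Set X} {J : X → X} (hA : IsMonotoneOp A)
    (hJ : IsResolventOf J A) (x y : X) :
    ‖J x - J y‖ ^ 2 ≤ (inner ℝ (x - y) (J x - J y) : ℝ) := by
  have h := hA (hJ x) (hJ y)
  have e : (x - J x) - (y - J y) = (x - y) - (J x - J y) := by abel
  rw [e, inner_sub_right] at h
  have h2 := real_inner_comm (J x - J y) (x - y)
  have h3 : (inner ℝ (J x - J y) (J x - J y) : ℝ) = ‖J x - J y‖ ^ 2 :=
    real_inner_self_eq_norm_sq _
  linarith

lemma refl_nonexp {A : X → Set X} {J : X → X} (hA : IsMonotoneOp A)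
    (hJ : IsResolventOf J A) (x y : X) :
    ‖((2:ℝ) • J x - x) - ((2:ℝ) • J y - y)‖ ≤ ‖x - y‖ := by
  have hf := resolvent_firm hA hJ x y
  have e : ((2:ℝ) • J x - x) - ((2:ℝ) • J y - y) = (2:ℝ) • (J x - J y) - (x - y) := by
    rw [smul_sub]; abel
  have hsq : ‖((2:ℝ) • J x - x) - ((2:ℝ) • J y - y)‖ ^ 2 ≤ ‖x - y‖ ^ 2 := by
    rw [e, norm_sub_sq_real, inner_smul_left, real_inner_comm]
    have h4 : ‖(2:ℝ) • (J x - J y)‖ ^ 2 = 4 * ‖J x - J y‖ ^ 2 := by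
      rw [norm_smul]; simp; ring
    rw [h4]
    simp only [starRingEnd_apply, star_trivial]
    nlinarith [hf]
  nlinarith [norm_nonneg (((2:ℝ) • J x - x) - ((2:ℝ) • J y - y)), norm_nonneg (x - y)]

lemma idsub_drT (JA JB : X → X) (x : X) :
    x - drT JA JB x = JA x - JB ((2:ℝ) • JA x - x) := by
  simp only [drT]; abel

lemma drT_nonexp {A B : X → Set X} {JA JB : X → X} (hA : IsMonotoneOp A)
    (hB : IsMonotoneOp B) (hJA : IsResolventOf JA A) (hJB : IsResolventOf JB B) (x y : X) :
    ‖drT JA JB x - drT JA JB y‖ ≤ ‖x - y‖ := by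
  have e : ∀ z : X, drT JA JB z
      = (1/2 : ℝ) • (z + ((2:ℝ) • JB ((2:ℝ) • JA z - z) - ((2:ℝ) • JA z - z))) := by
    intro z; simp only [drT]; module
  rw [e x, e y, ← smul_sub]
  have e2 : (x + ((2:ℝ) • JB ((2:ℝ) • JA x - x) - ((2:ℝ) • JA x - x)))
      - (y + ((2:ℝ) • JB ((2:ℝ) • JA y - y) - ((2:ℝ) • JA y - y)))
      = (x - y) + (((2:ℝ) • JB ((2:ℝ) • JA x - x) - ((2:ℝ) • JA x - x))
        - ((2:ℝ) • JB ((2:ℝ) • JA y - y) - ((2:ℝ) • JA y - y))) := by abel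
  rw [e2, norm_smul]
  have h1 := refl_nonexp hB hJB ((2:ℝ) • JA x - x) ((2:ℝ) • JA y - y)
  have h2 := refl_nonexp hA hJA x y
  have h3 := norm_add_le (x - y) (((2:ℝ) • JB ((2:ℝ) • JA x - x) - ((2:ℝ) • JA x - x))
        - ((2:ℝ) • JB ((2:ℝ) • JA y - y) - ((2:ℝ) • JA y - y)))
  have hn : ‖(1/2:ℝ)‖ = 1/2 := by norm_num
  rw [hn]
  linarith [h3, h1, h2]

lemma idsub_monotone {T : X → X} (hT : ∀ x y, ‖T x - T y‖ ≤ ‖x - y‖) (x y : X) :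
    0 ≤ (inner ℝ (x - y) ((x - T x) - (y - T y)) : ℝ) := by
  have e : (x - T x) - (y - T y) = (x - y) - (T x - T y) := by abel
  rw [e, inner_sub_right, real_inner_self_eq_norm_sq]
  have h1 := real_inner_le_norm (x - y) (T x - T y)
  nlinarith [hT x y, norm_nonneg (x - y)]

lemma solv {T : X → X} (hT : ∀ x y, ‖T x - T y‖ ≤ ‖x - y‖)
    [CompleteSpace X] {ε : ℝ} (hε : 0 < ε) (v : X) :
    ∃ x : X, ε • x + (x - T x) = v := by
  set k : NNReal := ⟨(1+ε)⁻¹, by positivity⟩ with hk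
  have hk1 : (k : ℝ) < 1 := by
    rw [hk]; change (1+ε)⁻¹ < (1:ℝ)
    rw [inv_lt_one_iff₀]; right; linarith
  set Ψ : X → X := fun z => (1+ε)⁻¹ • (T z + v) with hΨ
  have hLip : LipschitzWith k Ψ := by
    apply LipschitzWith.of_dist_le_mul
    intro a b
    have e : Ψ a - Ψ b = (1+ε)⁻¹ • (T a - T b) := by
      simp only [hΨ]; rw [← smul_sub]; congr 1; abel
    rw [dist_eq_norm, dist_eq_norm, e, norm_smul]
    have h5 : ‖(1+ε)⁻¹‖ = (1+ε)⁻¹ := by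
      rw [Real.norm_eq_abs, abs_of_pos]; positivity
    have h6 : (k : ℝ) = (1+ε)⁻¹ := rfl
    rw [h5, h6]
    exact mul_le_mul_of_nonneg_left (hT a b) (by positivity)
  have hC : ContractingWith k Ψ := ⟨by exact_mod_cast hk1, hLip⟩
  have : Nonempty X := ⟨0⟩
  refine ⟨hC.fixedPoint Ψ, ?_⟩
  have hfix : Ψ (hC.fixedPoint Ψ) = hC.fixedPoint Ψ := hC.fixedPoint_isFixedPt
  set x := hC.fixedPoint Ψ
  have h1 : (1+ε) • ((1+ε)⁻¹ • (T x + v)) = (1+ε) • x := by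
    rw [show (1+ε)⁻¹ • (T x + v) = x from hfix]
  rw [smul_smul, mul_inv_cancel₀ (by positivity : (1+ε) ≠ 0), one_smul] at h1
  have : ε • x + (x - T x) = (1+ε) • x - T x := by
    rw [add_smul, one_smul]; abel
  rw [this, ← h1]; abel

lemma Mbound {T : X → X} (hT : ∀ x y, ‖T x - T y‖ ≤ ‖x - y‖)
    {ε : ℝ} (hε : 0 < ε) {v x : X} (hx : ε • x + (x - T x) = v) :
    ‖ε • x‖ ≤ ‖v - (0 - T 0)‖ := by
  have h := idsub_monotone hT x 0
  have e : x - T x = v - ε • x := by rw [← hx]; abel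
  rw [e] at h
  have e2 : x - 0 = x := by abel
  rw [e2, inner_sub_right] at h
  have h2 : (inner ℝ x (v - (0 - T 0)) : ℝ) - inner ℝ x (ε • x) ≥ 0 := by
    have e3 : (inner ℝ x (v - ε • x) : ℝ) - inner ℝ x (0 - T 0)
        = inner ℝ x (v - (0 - T 0)) - inner ℝ x (ε • x) := by
      rw [← inner_sub_right, ← inner_sub_right]; congr 1; abel
    linarith [e3 ▸ h]
  have h3 : (inner ℝ x (ε • x) : ℝ) = ε * ‖x‖^2 := by
    rw [real_inner_smul_right, real_inner_self_eq_norm_sq]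
  have h4 := real_inner_le_norm x (v - (0 - T 0))
  rw [norm_smul, Real.norm_eq_abs, abs_of_pos hε]
  rcases eq_or_lt_of_le (norm_nonneg x) with h0 | h0
  · rw [← h0]; simp [norm_nonneg]
  · nlinarith [h2, h3, h4]

lemma mem_closure_of_est (F : X → X) (v : X)
    (hsol : ∀ ε : ℝ, 0 < ε → ∃ x, ε • x + F x = v)
    (K : ℝ) (hK : 0 ≤ K)
    (hbd : ∀ ε : ℝ, 0 < ε → ε ≤ 1 → ∀ x, ε • x + F x = v → ε * ‖x‖^2 ≤ K) :
    v ∈ closure (Set.range F) := by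
  rw [Metric.mem_closure_iff]
  intro δ hδ
  set ε := min 1 (δ^2/(2*(K+1))) with hε
  have hεpos : 0 < ε := by
    apply lt_min one_pos; positivity
  obtain ⟨x, hx⟩ := hsol ε hεpos
  refine ⟨F x, Set.mem_range_self x, ?_⟩
  have hb := hbd ε hεpos (min_le_left _ _) x hx
  have e : v - F x = ε • x := by rw [← hx]; abel
  rw [dist_eq_norm, e, norm_smul, Real.norm_eq_abs, abs_of_pos hεpos]
  have h2 : (ε * ‖x‖)^2 ≤ ε * K := by
    have : (ε * ‖x‖)^2 = ε * (ε * ‖x‖^2) := by ring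
    rw [this]
    exact mul_le_mul_of_nonneg_left hb (le_of_lt hεpos)
  have h3 : ε * K < δ^2 := by
    have h4 : ε ≤ δ^2/(2*(K+1)) := min_le_right _ _
    have h5 : ε * K ≤ δ^2/(2*(K+1)) * K := by
      apply mul_le_mul_of_nonneg_right h4 hK
    have h6 : δ^2/(2*(K+1)) * K < δ^2 := by
      rw [div_mul_eq_mul_div, div_lt_iff₀ (by positivity)]
      nlinarith [sq_nonneg δ]
    linarith
  nlinarith [mul_nonneg (le_of_lt hεpos) (norm_nonneg x), hδ]

lemma core_ident (a₁ s p x v : X) (ε : ℝ) :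
    (inner ℝ (a₁ - p) (s - (x - p)) : ℝ)
      + inner ℝ ((a₁ - v) - (p - (v - ε • x))) ((v - s) - ((v - ε • x) - (x - p)))
    = inner ℝ a₁ s + inner ℝ (a₁ - v) (v - s) - ε * ‖x‖^2 - ‖v - ε • x‖^2
      + inner ℝ (v - ε • x) ((v - s) - (a₁ - v)) := by
  simp only [inner_sub_left, inner_sub_right, inner_smul_left, inner_smul_right,
    starRingEnd_apply, star_trivial, ← real_inner_self_eq_norm_sq]
  linear_combination (-ε : ℝ) * real_inner_comm a₁ x - ε * real_inner_comm x p
    - ε * real_inner_comm x v + real_inner_comm a₁ v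

lemma core_estimate {A B : X → Set X} {JA JB : X → X}
    (hAm : IsMonotoneOp A) (hBm : IsMonotoneOp B)
    (hA3 : Is3StarMonotoneOp A) (hB3 : Is3StarMonotoneOp B)
    (hJA : IsResolventOf JA A) (hJB : IsResolventOf JB B)
    {v a₁ b₁ a b ast bst : X}
    (ha₁ : (A a₁).Nonempty) (hb₁ : (B b₁).Nonempty) (hv1 : a₁ - b₁ = v)
    (hast : ast ∈ A a) (hbst : bst ∈ B b) (hv2 : ast + bst = v) :
    ∃ K : ℝ, 0 ≤ K ∧ ∀ ε : ℝ, 0 < ε → ε ≤ 1 →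
      ∀ x : X, ε • x + (x - drT JA JB x) = v → ε * ‖x‖^2 ≤ K := by
  obtain ⟨CA, hCA⟩ := hA3 a₁ ha₁ ast (Set.mem_iUnion.2 ⟨a, hast⟩)
  obtain ⟨CB, hCB⟩ := hB3 b₁ hb₁ bst (Set.mem_iUnion.2 ⟨b, hbst⟩)
  set M := ‖v - (0 - drT JA JB 0)‖ with hM
  set K := (inner ℝ a₁ ast : ℝ) + inner ℝ (a₁ - v) (v - ast) - CA - CB
    + (‖v‖ + M) * ‖(v - ast) - (a₁ - v)‖ with hKdef
  refine ⟨max K 0, le_max_right _ _, ?_⟩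
  intro ε hε hε1 x hx
  set p := JA x with hp
  set q := JB ((2:ℝ) • p - x) with hq
  have hal : x - p ∈ A p := hJA x
  have hbe : ((2:ℝ) • p - x) - q ∈ B q := hJB _
  have hpq : p - q = v - ε • x := by
    have := idsub_drT JA JB x
    rw [← hp, ← hq] at this
    rw [← this, ← hx]; abel
  have hqe : q = p - (v - ε • x) := by rw [← hpq]; abel
  have hb₁e : b₁ = a₁ - v := by rw [← hv1]; abel
  have hbste : bst = v - ast := by rw [← hv2]; abel
  have hbee : ((2:ℝ) • p - x) - q = (v - ε • x) - (x - p) := by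
    rw [hqe]; module
  -- 3* monotone inequalities
  have h3A : CA ≤ (inner ℝ (a₁ - p) (ast - (x - p)) : ℝ) :=
    hCA ⟨p, x - p, hal, rfl⟩
  have h3B : CB ≤ (inner ℝ (b₁ - q) (bst - (((2:ℝ) • p - x) - q)) : ℝ) :=
    hCB ⟨q, ((2:ℝ) • p - x) - q, hbe, rfl⟩
  have hsum : CA + CB ≤ (inner ℝ a₁ ast : ℝ) + inner ℝ (a₁ - v) (v - ast)
      - ε * ‖x‖^2 - ‖v - ε • x‖^2 + inner ℝ (v - ε • x) ((v - ast) - (a₁ - v)) := by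
    rw [← core_ident a₁ ast p x v ε]
    have h3B' : CB ≤ (inner ℝ ((a₁ - v) - (p - (v - ε • x)))
        ((v - ast) - ((v - ε • x) - (x - p))) : ℝ) := by
      rw [← hb₁e, ← hqe, ← hbste, ← hbee]; exact h3B
    linarith [h3A, h3B']
  -- bound the inner ℝ product term
  have hMb : ‖ε • x‖ ≤ M := Mbound (drT_nonexp hAm hBm hJA hJB) hε hx
  have hy : ‖v - ε • x‖ ≤ ‖v‖ + M := by
    calc ‖v - ε • x‖ ≤ ‖v‖ + ‖ε • x‖ := norm_sub_le _ _
      _ ≤ ‖v‖ + M := by linarith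
  have hip : (inner ℝ (v - ε • x) ((v - ast) - (a₁ - v)) : ℝ)
      ≤ (‖v‖ + M) * ‖(v - ast) - (a₁ - v)‖ := by
    calc (inner ℝ (v - ε • x) ((v - ast) - (a₁ - v)) : ℝ)
        ≤ ‖v - ε • x‖ * ‖(v - ast) - (a₁ - v)‖ := real_inner_le_norm _ _
      _ ≤ (‖v‖ + M) * ‖(v - ast) - (a₁ - v)‖ :=
          mul_le_mul_of_nonneg_right hy (norm_nonneg _)
  have : ε * ‖x‖^2 ≤ K := by
    rw [hKdef]
    nlinarith [sq_nonneg ‖v - ε • x‖, hsum, hip]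
  exact le_trans this (le_max_left _ _)


lemma key_inclusion {X : Type*} [NormedAddCommGroup X] [InnerProductSpace ℝ X]
    [FiniteDimensional ℝ X] {A B : X → Set X} {JA JB : X → X}
    (hAm : IsMonotoneOp A) (hBm : IsMonotoneOp B)
    (hA3 : Is3StarMonotoneOp A) (hB3 : Is3StarMonotoneOp B)
    (hJA : IsResolventOf JA A) (hJB : IsResolventOf JB B)
    {W : Submodule ℝ X} (hW : svDom A - svDom B = (W : Set X)) :
    Set.range (fun x => x - drT JB JA x)
      ⊆ closure (Set.range fun x => x - drT JA JB x) := by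
  rintro v ⟨y₀, rfl⟩
  set b := JB y₀ with hb
  set a := JA ((2:ℝ) • b - y₀) with ha
  have hbst : y₀ - b ∈ B b := hJB y₀
  have hast : ((2:ℝ) • b - y₀) - a ∈ A a := hJA _
  have hveq : y₀ - drT JB JA y₀ = b - a := by
    rw [idsub_drT JB JA y₀, ← hb, ← ha]
  set v := y₀ - drT JB JA y₀ with hv
  have hv2 : (((2:ℝ) • b - y₀) - a) + (y₀ - b) = v := by rw [hveq]; module
  -- v ∈ W
  have hmem : a - b ∈ (W : Set X) := by
    rw [← hW]
    exact Set.sub_mem_sub ⟨_, hast⟩ ⟨_, hbst⟩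
  have hvW : v ∈ (W : Set X) := by
    have : -(a - b) ∈ W := W.neg_mem hmem
    have e : -(a - b) = v := by rw [hveq]; abel
    rwa [e] at this
  rw [← hW] at hvW
  obtain ⟨a₁, ha₁, b₁, hb₁, hv1⟩ := Set.mem_sub.1 hvW
  obtain ⟨K, hK0, hK⟩ := core_estimate hAm hBm hA3 hB3 hJA hJB ha₁ hb₁ hv1 hast hbst hv2
  have hCrange : (Set.range fun x => x - drT JA JB x)
      = Set.range (fun x => x - drT JA JB x) := rfl
  apply mem_closure_of_est (fun x => x - drT JA JB x) v
    (fun ε hε => solv (drT_nonexp hAm hBm hJA hJB) hε v) K hK0 hK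


lemma mid_ident {X : Type*} [NormedAddCommGroup X] [InnerProductSpace ℝ X]
    (x u₁ u₂ w₁ w₂ : X) (ε : ℝ) :
    (inner ℝ (x - u₁) (((1/2:ℝ) • (w₁ + w₂) - ε • x) - w₁) : ℝ)
      + inner ℝ (x - u₂) (((1/2:ℝ) • (w₁ + w₂) - ε • x) - w₂)
    = -(2*ε) * ‖x‖^2 + inner ℝ u₁ (w₁ - ((1/2:ℝ) • (w₁ + w₂) - ε • x))
      + inner ℝ u₂ (w₂ - ((1/2:ℝ) • (w₁ + w₂) - ε • x)) := by
  simp only [inner_sub_left, inner_sub_right, inner_add_left, inner_add_right,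
    inner_smul_left, inner_smul_right, starRingEnd_apply, star_trivial,
    ← real_inner_self_eq_norm_sq]
  ring

lemma midpoint_exact_est {X : Type*} [NormedAddCommGroup X] [InnerProductSpace ℝ X]
    {T : X → X} (hT : ∀ x y, ‖T x - T y‖ ≤ ‖x - y‖) (u₁ u₂ : X) :
    ∃ K : ℝ, 0 ≤ K ∧ ∀ ε : ℝ, 0 < ε → ε ≤ 1 → ∀ x : X,
      ε • x + (x - T x) = (1/2:ℝ) • ((u₁ - T u₁) + (u₂ - T u₂)) → ε * ‖x‖^2 ≤ K := by
  set w₁ := u₁ - T u₁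
  set w₂ := u₂ - T u₂
  set v := (1/2:ℝ) • (w₁ + w₂) with hv
  set M := ‖v - (0 - T 0)‖ with hM
  set K := (‖u₁‖ * (‖w₁ - v‖ + M) + ‖u₂‖ * (‖w₂ - v‖ + M)) / 2 with hK
  refine ⟨max K 0, le_max_right _ _, ?_⟩
  intro ε hε hε1 x hx
  have hFx : x - T x = v - ε • x := by rw [← hx]; abel
  have h1 := idsub_monotone hT x u₁
  have h2 := idsub_monotone hT x u₂
  rw [hFx] at h1 h2
  have hid := mid_ident x u₁ u₂ w₁ w₂ ε
  rw [← hv] at hid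
  have hMb : ‖ε • x‖ ≤ M := Mbound hT hε hx
  have hb1 : (inner ℝ u₁ (w₁ - (v - ε • x)) : ℝ) ≤ ‖u₁‖ * (‖w₁ - v‖ + M) := by
    calc (inner ℝ u₁ (w₁ - (v - ε • x)) : ℝ) ≤ ‖u₁‖ * ‖w₁ - (v - ε • x)‖ :=
          real_inner_le_norm _ _
      _ ≤ ‖u₁‖ * (‖w₁ - v‖ + M) := by
          apply mul_le_mul_of_nonneg_left _ (norm_nonneg _)
          calc ‖w₁ - (v - ε • x)‖ = ‖(w₁ - v) + ε • x‖ := by congr 1; abel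
            _ ≤ ‖w₁ - v‖ + ‖ε • x‖ := norm_add_le _ _
            _ ≤ ‖w₁ - v‖ + M := by linarith
  have hb2 : (inner ℝ u₂ (w₂ - (v - ε • x)) : ℝ) ≤ ‖u₂‖ * (‖w₂ - v‖ + M) := by
    calc (inner ℝ u₂ (w₂ - (v - ε • x)) : ℝ) ≤ ‖u₂‖ * ‖w₂ - (v - ε • x)‖ :=
          real_inner_le_norm _ _
      _ ≤ ‖u₂‖ * (‖w₂ - v‖ + M) := by
          apply mul_le_mul_of_nonneg_left _ (norm_nonneg _)
          calc ‖w₂ - (v - ε • x)‖ = ‖(w₂ - v) + ε • x‖ := by congr 1; abel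
            _ ≤ ‖w₂ - v‖ + ‖ε • x‖ := norm_add_le _ _
            _ ≤ ‖w₂ - v‖ + M := by linarith
  have : ε * ‖x‖^2 ≤ K := by rw [hK]; linarith
  exact le_trans this (le_max_left _ _)

lemma midpoint_closure {X : Type*} [NormedAddCommGroup X] [InnerProductSpace ℝ X]
    [FiniteDimensional ℝ X] {T : X → X} (hT : ∀ x y, ‖T x - T y‖ ≤ ‖x - y‖)
    {u w : X} (hu : u ∈ closure (Set.range fun x => x - T x))
    (hw : w ∈ closure (Set.range fun x => x - T x)) :
    (1/2:ℝ) • (u + w) ∈ closure (Set.range fun x => x - T x) := by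
  obtain ⟨as, has, hasu⟩ := mem_closure_iff_seq_limit.1 hu
  obtain ⟨bs, hbs, hbsw⟩ := mem_closure_iff_seq_limit.1 hw
  have key : ∀ n, (1/2:ℝ) • (as n + bs n) ∈ closure (Set.range fun x => x - T x) := by
    intro n
    obtain ⟨u₁, hu₁⟩ := has n
    obtain ⟨u₂, hu₂⟩ := hbs n
    obtain ⟨K, hK0, hK⟩ := midpoint_exact_est hT u₁ u₂
    have hveq : (1/2:ℝ) • ((u₁ - T u₁) + (u₂ - T u₂)) = (1/2:ℝ) • (as n + bs n) := by
      rw [show u₁ - T u₁ = as n from hu₁, show u₂ - T u₂ = bs n from hu₂]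
    rw [← hveq]
    exact mem_closure_of_est _ _
      (fun ε hε => solv hT hε _) K hK0 hK
  have hlim : Filter.Tendsto (fun n => (1/2:ℝ) • (as n + bs n)) Filter.atTop
      (nhds ((1/2:ℝ) • (u + w))) := (hasu.add hbsw).const_smul _
  exact isClosed_closure.mem_of_tendsto hlim (Filter.Eventually.of_forall key)

lemma eps_tendsto {X : Type*} [NormedAddCommGroup X] [InnerProductSpace ℝ X]
    [FiniteDimensional ℝ X] {T : X → X} (hT : ∀ x y, ‖T x - T y‖ ≤ ‖x - y‖)
    {v : X} (hv : v ∈ closure (Set.range fun x => x - T x))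
    {εs : ℕ → ℝ} (hεp : ∀ n, 0 < εs n) (hεto : Filter.Tendsto εs Filter.atTop (nhds 0))
    {xs : ℕ → X} (hxs : ∀ n, εs n • xs n + (xs n - T (xs n)) = v) :
    Filter.Tendsto (fun n => εs n • xs n) Filter.atTop (nhds 0) := by
  rw [NormedAddCommGroup.tendsto_nhds_zero]
  intro δ hδ
  set M := ‖v - (0 - T 0)‖ with hM
  have hM0 : 0 ≤ M := norm_nonneg _
  set δ' := δ^2/(2*(M+1)) with hδ'
  have hδ'pos : 0 < δ' := by positivity
  obtain ⟨y, hy, hdist⟩ := Metric.mem_closure_iff.1 hv δ' hδ'pos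
  obtain ⟨u, hu⟩ := hy
  set C := ‖u‖ * (δ' + M) with hC
  have hC0 : 0 ≤ C := by positivity
  have hεev : ∀ᶠ n in Filter.atTop, εs n < δ^2/(2*(C+1)) :=
    hεto.eventually (gt_mem_nhds (by positivity))
  filter_upwards [hεev] with n hn
  -- the basic inequality
  have hFx : xs n - T (xs n) = v - εs n • xs n := by rw [← hxs n]; abel
  have h0 := idsub_monotone hT (xs n) u
  rw [hFx] at h0
  set w := u - T u with hw
  have hvwlt : ‖v - w‖ < δ' := by
    have hyw : w = y := hu
    rw [hyw, ← dist_eq_norm]; exact hdist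
  have hMb : ‖εs n • xs n‖ ≤ M := Mbound hT (hεp n) (hxs n)
  -- expand h0
  have hexp : (inner ℝ (xs n - u) ((v - εs n • xs n) - w) : ℝ)
      = inner ℝ (xs n) (v - w) - εs n * ‖xs n‖^2 - inner ℝ u ((v - εs n • xs n) - w) := by
    simp only [inner_sub_left, inner_sub_right, inner_smul_left, inner_smul_right,
      starRingEnd_apply, star_trivial, ← real_inner_self_eq_norm_sq]
    ring
  have hstep : εs n * ‖xs n‖^2
      ≤ inner ℝ (xs n) (v - w) - (inner ℝ u ((v - εs n • xs n) - w) : ℝ) := by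
    rw [hexp] at h0; linarith
  have hkey : ‖εs n • xs n‖^2 ≤ ‖εs n • xs n‖ * ‖v - w‖ + εs n * C := by
    have e1 : ‖εs n • xs n‖^2 = εs n * (εs n * ‖xs n‖^2) := by
      rw [norm_smul, Real.norm_eq_abs, abs_of_pos (hεp n)]; ring
    have e2 : εs n * (inner ℝ (xs n) (v - w) : ℝ) = inner ℝ (εs n • xs n) (v - w) := by
      rw [real_inner_smul_left]
    have h3 : (inner ℝ (εs n • xs n) (v - w) : ℝ) ≤ ‖εs n • xs n‖ * ‖v - w‖ :=
      real_inner_le_norm _ _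
    have h4 : -(inner ℝ u ((v - εs n • xs n) - w) : ℝ) ≤ C := by
      have := abs_real_inner_le_norm u ((v - εs n • xs n) - w)
      have h5 : ‖(v - εs n • xs n) - w‖ ≤ δ' + M := by
        calc ‖(v - εs n • xs n) - w‖ = ‖(v - w) + -(εs n • xs n)‖ := by congr 1; abel
          _ ≤ ‖v - w‖ + ‖εs n • xs n‖ := by
              refine le_trans (norm_add_le _ _) ?_
              rw [norm_neg]
          _ ≤ δ' + M := by linarith
      have h6 : ‖u‖ * ‖(v - εs n • xs n) - w‖ ≤ C := by
        rw [hC]; exact mul_le_mul_of_nonneg_left h5 (norm_nonneg _)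
      nlinarith [abs_nonneg (inner ℝ u ((v - εs n • xs n) - w) : ℝ),
        neg_abs_le (inner ℝ u ((v - εs n • xs n) - w) : ℝ)]
    have h7 : εs n * (εs n * ‖xs n‖^2)
        ≤ εs n * ((inner ℝ (xs n) (v - w) : ℝ) - inner ℝ u ((v - εs n • xs n) - w)) :=
      mul_le_mul_of_nonneg_left hstep (le_of_lt (hεp n))
    calc ‖εs n • xs n‖^2 = εs n * (εs n * ‖xs n‖^2) := e1
      _ ≤ εs n * ((inner ℝ (xs n) (v - w) : ℝ) - inner ℝ u ((v - εs n • xs n) - w)) := h7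
      _ = (inner ℝ (εs n • xs n) (v - w) : ℝ) + εs n * (-(inner ℝ u ((v - εs n • xs n) - w))) := by
          rw [← e2]; ring
      _ ≤ ‖εs n • xs n‖ * ‖v - w‖ + εs n * C := by
          have := mul_le_mul_of_nonneg_left h4 (le_of_lt (hεp n))
          linarith
  -- conclude
  have hfin : ‖εs n • xs n‖^2 < δ^2 := by
    have t1 : ‖εs n • xs n‖ * ‖v - w‖ ≤ M * δ' := by
      apply mul_le_mul hMb (le_of_lt hvwlt) (norm_nonneg _) hM0
    have t2 : M * δ' < δ^2/2 := by
      have e : δ' * (M + 1) = δ^2 / 2 := by rw [hδ']; field_simp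
      nlinarith [hδ'pos]
    have t3 : εs n * C < δ^2/2 := by
      have := mul_le_mul_of_nonneg_right (le_of_lt hn) hC0
      have t4 : δ^2/(2*(C+1)) * C < δ^2/2 := by
        have e : δ^2/(2*(C+1)) * (C + 1) = δ^2 / 2 := by field_simp
        have hp : (0:ℝ) < δ^2/(2*(C+1)) := by positivity
        nlinarith [hp]
      linarith
    linarith
  nlinarith [norm_nonneg (εs n • xs n), hδ]


lemma ri_extend {X : Type*} [NormedAddCommGroup X] [InnerProductSpace ℝ X]
    {K : Set X} {z w : X} (hz : z ∈ intrinsicInterior ℝ K) (hw : w ∈ K) :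
    ∃ t : ℝ, 0 < t ∧ z + t • (z - w) ∈ K := by
  obtain ⟨z₀, hz₀, hz₀v⟩ := mem_intrinsicInterior.1 hz
  have hwV : w ∈ affineSpan ℝ K := subset_affineSpan ℝ K hw
  have hmem : ∀ t : ℝ, (↑z₀ : X) + t • ((↑z₀ : X) - w) ∈ affineSpan ℝ K := by
    intro t
    have := (affineSpan ℝ K).smul_vsub_vadd_mem t z₀.2 hwV z₀.2
    simpa [vsub_eq_sub, vadd_eq_add, add_comm] using this
  set c : ℝ → (affineSpan ℝ K : Set X) := fun t => ⟨(↑z₀ : X) + t • ((↑z₀ : X) - w), hmem t⟩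
    with hc
  have hcont : Continuous c := by
    apply Continuous.subtype_mk
    exact continuous_const.add ((continuous_id.smul continuous_const))
  have hc0 : c 0 = z₀ := by
    apply Subtype.ext; simp [hc]
  have hopen : IsOpen (c ⁻¹' interior (((↑) : (affineSpan ℝ K : Set X) → X) ⁻¹' K)) :=
    isOpen_interior.preimage hcont
  have h0mem : (0:ℝ) ∈ c ⁻¹' interior (((↑) : (affineSpan ℝ K : Set X) → X) ⁻¹' K) := by
    rw [Set.mem_preimage, hc0]; exact hz₀
  obtain ⟨δ, hδ, hball⟩ := Metric.isOpen_iff.1 hopen 0 h0mem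
  have hmemball : (δ/2 : ℝ) ∈ Metric.ball (0:ℝ) δ := by
    rw [Metric.mem_ball, Real.dist_eq, sub_zero, abs_of_pos (by positivity)]
    linarith
  have h2 : c (δ/2) ∈ ((↑) : (affineSpan ℝ K : Set X) → X) ⁻¹' K :=
    interior_subset (hball hmemball)
  refine ⟨δ/2, by positivity, ?_⟩
  rw [Set.mem_preimage] at h2
  rw [← hz₀v]
  exact h2

lemma ri_subset {X : Type*} [NormedAddCommGroup X] [InnerProductSpace ℝ X]
    [FiniteDimensional ℝ X] {T : X → X} (hT : ∀ x y, ‖T x - T y‖ ≤ ‖x - y‖) :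
    intrinsicInterior ℝ (closure (Set.range fun x => x - T x))
      ⊆ Set.range (fun x => x - T x) := by
  intro z hz
  have hzK : z ∈ closure (Set.range fun x => x - T x) := intrinsicInterior_subset hz
  have hTc : Continuous T := by
    have hl : LipschitzWith 1 T := LipschitzWith.of_dist_le_mul (fun a b => by
      rw [NNReal.coe_one, one_mul, dist_eq_norm, dist_eq_norm]; exact hT a b)
    exact hl.continuous
  have hFc : Continuous (fun x => x - T x) := continuous_id.sub hTc
  set εs : ℕ → ℝ := fun n => 1/(n+1) with hεs
  have hεp : ∀ n, 0 < εs n := fun n => by positivity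
  have hsol : ∀ n : ℕ, ∃ x, εs n • x + (x - T x) = z := fun n => solv hT (hεp n) z
  choose xs hxs using hsol
  have hεto : Filter.Tendsto εs Filter.atTop (nhds 0) := by
    rw [hεs]; exact tendsto_one_div_add_atTop_nhds_zero_nat
  have hz0 : Filter.Tendsto (fun n => εs n • xs n) Filter.atTop (nhds 0) :=
    eps_tendsto hT hzK hεp hεto hxs
  have hFxs : ∀ n, xs n - T (xs n) = z - εs n • xs n := fun n => by
    rw [← hxs n]; abel
  by_cases hbb : ∃ c : ℝ, ∃ᶠ n in Filter.atTop, ‖xs n‖ ≤ c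
  · obtain ⟨c, hc⟩ := hbb
    obtain ⟨φ, hφ, hφc⟩ := Filter.extraction_of_frequently_atTop hc
    have hmemball : ∀ k, xs (φ k) ∈ Metric.closedBall (0:X) c := fun k => by
      rw [mem_closedBall_zero_iff]; exact hφc k
    obtain ⟨xb, hxbmem, ψ, hψ, hlim⟩ := tendsto_subseq_of_bounded
      Metric.isBounded_closedBall hmemball
    have hFlim : Filter.Tendsto (fun k => xs (φ (ψ k)) - T (xs (φ (ψ k)))) Filter.atTop
        (nhds (xb - T xb)) := (hFc.tendsto xb).comp hlim
    have hzlim : Filter.Tendsto (fun k => xs (φ (ψ k)) - T (xs (φ (ψ k)))) Filter.atTop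
        (nhds z) := by
      have h1 : Filter.Tendsto (fun k => εs (φ (ψ k)) • xs (φ (ψ k))) Filter.atTop (nhds 0) :=
        hz0.comp ((hφ.comp hψ).tendsto_atTop)
      have e : (fun k => xs (φ (ψ k)) - T (xs (φ (ψ k))))
          = fun k => z - εs (φ (ψ k)) • xs (φ (ψ k)) := funext fun k => hFxs _
      rw [e]
      simpa using tendsto_const_nhds.sub h1
    exact ⟨xb, tendsto_nhds_unique hFlim hzlim⟩
  · push_neg at hbb
    exfalso
    have hnorm : Filter.Tendsto (fun n => ‖xs n‖) Filter.atTop Filter.atTop := by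
      rw [Filter.tendsto_atTop]
      intro b
      have hb := hbb b
      exact hb.mono fun n h => le_of_lt h
    set g : ℕ → X := fun n => ‖xs n‖⁻¹ • xs n with hg
    have hgball : ∀ n, g n ∈ Metric.closedBall (0:X) 1 := by
      intro n
      rw [mem_closedBall_zero_iff, hg]
      simp only
      rw [norm_smul, norm_inv, norm_norm]
      rcases eq_or_ne ‖xs n‖ 0 with h|h
      · simp [h]
      · rw [inv_mul_cancel₀ h]
    obtain ⟨h, hhmem, ψ, hψ, hgh⟩ := tendsto_subseq_of_bounded
      Metric.isBounded_closedBall hgball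
    have hnormψ : Filter.Tendsto (fun k => ‖xs (ψ k)‖) Filter.atTop Filter.atTop :=
      hnorm.comp hψ.tendsto_atTop
    have hne : Filter.Tendsto (fun k => ‖g (ψ k)‖) Filter.atTop (nhds ‖h‖) := hgh.norm
    have hone : ∀ᶠ k in Filter.atTop, ‖g (ψ k)‖ = 1 := by
      filter_upwards [hnormψ.eventually_gt_atTop 0] with k hk
      rw [hg]; simp only
      rw [norm_smul, norm_inv, norm_norm, inv_mul_cancel₀ (ne_of_gt hk)]
    have hh1 : ‖h‖ = 1 := by
      have h2 : Filter.Tendsto (fun k => ‖g (ψ k)‖) Filter.atTop (nhds 1) :=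
        tendsto_const_nhds.congr' (hone.mono fun k hk => hk.symm)
      exact tendsto_nhds_unique hne h2
    have hinv0 : Filter.Tendsto (fun k => ‖xs (ψ k)‖⁻¹) Filter.atTop (nhds 0) :=
      tendsto_inv_atTop_zero.comp hnormψ
    have hsub0 : Filter.Tendsto (fun k => εs (ψ k) • xs (ψ k)) Filter.atTop (nhds 0) :=
      hz0.comp hψ.tendsto_atTop
    have hkey : ∀ u : X, 0 ≤ (inner ℝ h (z - (u - T u)) : ℝ) := by
      intro u
      have hterm : ∀ k, 0 ≤ (inner ℝ (g (ψ k) - ‖xs (ψ k)‖⁻¹ • u)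
          ((z - εs (ψ k) • xs (ψ k)) - (u - T u)) : ℝ) := by
        intro k
        have h0 := idsub_monotone hT (xs (ψ k)) u
        rw [hFxs (ψ k)] at h0
        have e : (inner ℝ (g (ψ k) - ‖xs (ψ k)‖⁻¹ • u)
            ((z - εs (ψ k) • xs (ψ k)) - (u - T u)) : ℝ)
            = ‖xs (ψ k)‖⁻¹ * inner ℝ (xs (ψ k) - u) ((z - εs (ψ k) • xs (ψ k)) - (u - T u)) := by
          rw [hg]; simp only
          rw [← smul_sub, real_inner_smul_left]
        rw [e]
        exact mul_nonneg (inv_nonneg.2 (norm_nonneg _)) h0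
      have hu0 : Filter.Tendsto (fun k => ‖xs (ψ k)‖⁻¹ • u) Filter.atTop (nhds 0) := by
        have := hinv0.smul_const u
        rwa [zero_smul] at this
      have hlim2 : Filter.Tendsto (fun k => (inner ℝ (g (ψ k) - ‖xs (ψ k)‖⁻¹ • u)
          ((z - εs (ψ k) • xs (ψ k)) - (u - T u)) : ℝ)) Filter.atTop
          (nhds (inner ℝ (h - 0) ((z - 0) - (u - T u)))) :=
        Filter.Tendsto.inner (hgh.sub hu0)
          ((tendsto_const_nhds.sub hsub0).sub tendsto_const_nhds)
      have hge := ge_of_tendsto hlim2 (Filter.Eventually.of_forall hterm)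
      simpa using hge
    have hplane : ∀ w ∈ closure (Set.range fun x => x - T x), 0 ≤ (inner ℝ h (z - w) : ℝ) := by
      intro w hw
      have hcl : IsClosed {w : X | 0 ≤ (inner ℝ h (z - w) : ℝ)} :=
        isClosed_le continuous_const
          (Continuous.inner continuous_const (continuous_const.sub continuous_id))
      have hsub : (Set.range fun x => x - T x) ⊆ {w : X | 0 ≤ (inner ℝ h (z - w) : ℝ)} := by
        rintro _ ⟨u, rfl⟩; exact hkey u
      exact closure_minimal hsub hcl hw
    have hplane2 : ∀ w ∈ closure (Set.range fun x => x - T x),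
        (inner ℝ h (z - w) : ℝ) ≤ 0 := by
      intro w hw
      obtain ⟨t, ht, htm⟩ := ri_extend hz hw
      have hp := hplane _ htm
      have e : z - (z + t • (z - w)) = -(t • (z - w)) := by abel
      rw [e, inner_neg_right, real_inner_smul_right] at hp
      nlinarith [hp]
    have hzero : ∀ k, (inner ℝ h (g (ψ k)) : ℝ) = 0 := by
      intro k
      have hFmem : xs (ψ k) - T (xs (ψ k)) ∈ closure (Set.range fun x => x - T x) :=
        subset_closure ⟨_, rfl⟩
      have heq : (inner ℝ h (z - (xs (ψ k) - T (xs (ψ k)))) : ℝ) = 0 :=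
        le_antisymm (hplane2 _ hFmem) (hplane _ hFmem)
      have e : z - (xs (ψ k) - T (xs (ψ k))) = εs (ψ k) • xs (ψ k) := by
        rw [hFxs (ψ k)]; abel
      rw [e, real_inner_smul_right] at heq
      have hinner0 : (inner ℝ h (xs (ψ k)) : ℝ) = 0 :=
        (mul_eq_zero.1 heq).resolve_left (ne_of_gt (hεp (ψ k)))
      rw [hg]; simp only
      rw [real_inner_smul_right, hinner0, mul_zero]
    have hlim3 : Filter.Tendsto (fun k => (inner ℝ h (g (ψ k)) : ℝ)) Filter.atTop
        (nhds (inner ℝ h h : ℝ)) := Filter.Tendsto.inner tendsto_const_nhds hgh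
    have hhh : (inner ℝ h h : ℝ) = 0 :=
      tendsto_nhds_unique hlim3 (tendsto_const_nhds.congr (fun k => (hzero k).symm))
    rw [real_inner_self_eq_norm_sq, hh1] at hhh
    norm_num at hhh


lemma intrinsic_transport {X : Type*} [NormedAddCommGroup X] [InnerProductSpace ℝ X]
    {S : Set X} {V : AffineSubspace ℝ X} (h : affineSpan ℝ S = V) :
    intrinsicInterior ℝ S
      = ((↑) : V → X) '' interior (((↑) : V → X) ⁻¹' S) := by
  subst h; rfl

lemma ri_step {X : Type*} [NormedAddCommGroup X] [InnerProductSpace ℝ X]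
    [FiniteDimensional ℝ X] {S K : Set X} (hSK : S ⊆ K) (hKS : K = closure S)
    (hri : intrinsicInterior ℝ K ⊆ S) :
    intrinsicInterior ℝ S = intrinsicInterior ℝ K := by
  have hsp : affineSpan ℝ S = affineSpan ℝ K := by
    apply le_antisymm (affineSpan_mono ℝ hSK)
    rw [affineSpan_le, hKS]
    exact closure_minimal (subset_affineSpan ℝ S)
      (AffineSubspace.closed_of_finiteDimensional _)
  rw [intrinsic_transport hsp]
  have hIeq : interior (((↑) : affineSpan ℝ K → X) ⁻¹' S)
      = interior (((↑) : affineSpan ℝ K → X) ⁻¹' K) := by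
    apply Set.Subset.antisymm
    · exact interior_mono (Set.preimage_mono hSK)
    · apply interior_maximal _ isOpen_interior
      intro y hy
      have hmem : (↑y : X) ∈ intrinsicInterior ℝ K := ⟨y, hy, rfl⟩
      exact hri hmem
  rw [hIeq]
  rfl

end Auxiliary

/-- For maximally monotone, 3* monotone `A, B`, if `D = dom A - dom B` is a linear
subspace of `X`, then `ran (Id - T_{(A,B)}) ≃ ran (Id - T_{(B,A)})` and the infimal
displacement vectors coincide: `v_{(A,B)} = v_{(B,A)}`. -/
theorem nearEq_swap_and_infDisp_eq {X : Type*} [NormedAddCommGroup X]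
    [InnerProductSpace ℝ X] [FiniteDimensional ℝ X] (A B : X → Set X)
    (hA : IsMaxMonotoneOp A) (hB : IsMaxMonotoneOp B)
    (hA3 : Is3StarMonotoneOp A) (hB3 : Is3StarMonotoneOp B)
    (JA JB : X → X) (hJA : IsResolventOf JA A) (hJB : IsResolventOf JB B)
    (hD : ∃ W : Submodule ℝ X, svDom A - svDom B = (W : Set X))
    (vAB vBA : X)
    (hvAB : vAB ∈ closure (Set.range fun x => x - drT JA JB x) ∧
      ∀ w ∈ closure (Set.range fun x => x - drT JA JB x), ‖vAB‖ ≤ ‖w‖)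
    (hvBA : vBA ∈ closure (Set.range fun x => x - drT JB JA x) ∧
      ∀ w ∈ closure (Set.range fun x => x - drT JB JA x), ‖vBA‖ ≤ ‖w‖) :
    NearEq (Set.range fun x => x - drT JA JB x)
        (Set.range fun x => x - drT JB JA x) ∧
      vAB = vBA := by
  obtain ⟨W, hW⟩ := hD
  have hAm := hA.1
  have hBm := hB.1
  -- swapped subspace hypothesis
  have hW' : svDom B - svDom A = (W : Set X) := by
    ext z
    constructor
    · intro hz
      obtain ⟨b, hb, a, ha, hab⟩ := Set.mem_sub.1 hz
      have h1 : a - b ∈ (W : Set X) := hW ▸ Set.sub_mem_sub ha hb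
      have h2 : -(a - b) ∈ W := W.neg_mem h1
      have e : -(a - b) = z := by rw [← hab]; abel
      rwa [e] at h2
    · intro hz
      have h1 : -z ∈ (W : Set X) := W.neg_mem hz
      rw [← hW] at h1
      obtain ⟨a, ha, b, hb, hab⟩ := Set.mem_sub.1 h1
      refine Set.mem_sub.2 ⟨b, hb, a, ha, ?_⟩
      have : b - a = -(a - b) := by abel
      rw [this, hab, neg_neg]
  -- mutual inclusions into closures
  have incl12 : (Set.range fun x => x - drT JB JA x)
      ⊆ closure (Set.range fun x => x - drT JA JB x) :=
    key_inclusion hAm hBm hA3 hB3 hJA hJB hW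
  have incl21 : (Set.range fun x => x - drT JA JB x)
      ⊆ closure (Set.range fun x => x - drT JB JA x) :=
    key_inclusion hBm hAm hB3 hA3 hJB hJA hW'
  have hcl : closure (Set.range fun x => x - drT JA JB x)
      = closure (Set.range fun x => x - drT JB JA x) := by
    apply Set.Subset.antisymm
    · exact closure_minimal incl21 isClosed_closure
    · exact closure_minimal incl12 isClosed_closure
  -- nonexpansiveness of the two DR operators
  have hT1 := drT_nonexp hAm hBm hJA hJB
  have hT2 := drT_nonexp hBm hAm hJB hJA
  -- relative interiors
  have hri1 : intrinsicInterior ℝ (closure (Set.range fun x => x - drT JA JB x))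
      ⊆ (Set.range fun x => x - drT JA JB x) := ri_subset hT1
  have hri2 : intrinsicInterior ℝ (closure (Set.range fun x => x - drT JB JA x))
      ⊆ (Set.range fun x => x - drT JB JA x) := ri_subset hT2
  have hriq1 : intrinsicInterior ℝ (Set.range fun x => x - drT JA JB x)
      = intrinsicInterior ℝ (closure (Set.range fun x => x - drT JA JB x)) :=
    ri_step subset_closure rfl hri1
  have hriq2 : intrinsicInterior ℝ (Set.range fun x => x - drT JB JA x)
      = intrinsicInterior ℝ (closure (Set.range fun x => x - drT JB JA x)) :=
    ri_step subset_closure rfl hri2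
  have hri : intrinsicInterior ℝ (Set.range fun x => x - drT JA JB x)
      = intrinsicInterior ℝ (Set.range fun x => x - drT JB JA x) := by
    rw [hriq1, hriq2, hcl]
  refine ⟨⟨hcl, hri⟩, ?_⟩
  -- minimal norm uniqueness
  have hvBA1 : vBA ∈ closure (Set.range fun x => x - drT JA JB x) := by
    rw [hcl]; exact hvBA.1
  have hn1 : ‖vAB‖ ≤ ‖vBA‖ := hvAB.2 vBA hvBA1
  have hn2 : ‖vBA‖ ≤ ‖vAB‖ := hvBA.2 vAB (by rw [← hcl]; exact hvAB.1)
  have hmid : (1/2:ℝ) • (vAB + vBA) ∈ closure (Set.range fun x => x - drT JA JB x) :=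
    midpoint_closure hT1 hvAB.1 hvBA1
  have hm : ‖vAB‖ ≤ ‖(1/2:ℝ) • (vAB + vBA)‖ := hvAB.2 _ hmid
  have hmn : ‖(1/2:ℝ) • (vAB + vBA)‖ = (1/2) * ‖vAB + vBA‖ := by
    rw [norm_smul]; norm_num
  have hpar := parallelogram_law_with_norm ℝ vAB vBA
  have heq : ‖vAB - vBA‖ = 0 := by
    have h1 : ‖vAB‖ = ‖vBA‖ := le_antisymm hn1 hn2
    rw [hmn] at hm
    nlinarith [norm_nonneg (vAB - vBA), norm_nonneg (vAB + vBA), norm_nonneg vAB]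
  exact sub_eq_zero.1 (norm_eq_zero.1 heq)
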